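/- Let 𝒫 be a set of Q-matrices with associated penalizations (f_q)_{q∈𝒫} such that sup_q f_q = 0 is attained. The Nisio semigroup 𝒮(t)u₀ = sup_{π ∈ P_t} ℰ_π u₀ satisfies the dynamic programming principle: 𝒮(s+t) = 𝒮(s) ∘ 𝒮(t) for all s, t ≥ 0, and 𝒮(0) = id. -/

import Mathlib

def IsQMatrix {d : ℕ} (q : Matrix (Fin d) (Fin d) ℝ) : Prop :=
  (∀ i, q i i ≤ 0) ∧ (∀ i j, i ≠ j → 0 ≤ q i j) ∧ (∀ i, ∑ j, q i j = 0)

/-- The affine semigroup `S_q(t)u₀ = e^{tq}u₀ + ∫₀^t e^{sq} f ds`. -/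
noncomputable def Sq {d : ℕ} (q : Matrix (Fin d) (Fin d) ℝ) (f : Fin d → ℝ)
    (t : ℝ) (u : Fin d → ℝ) : Fin d → ℝ :=
  (NormedSpace.exp (t • q)).mulVec u +
    ∫ s in (0 : ℝ)..t, (NormedSpace.exp (s • q)).mulVec f

/-- The one-step operator `ℰ_h u = sup_{q ∈ P} S_q(h)u` (componentwise sup). -/
noncomputable def Eop {d : ℕ} (P : Set (Matrix (Fin d) (Fin d) ℝ))
    (f : Matrix (Fin d) (Fin d) ℝ → Fin d → ℝ) (h : ℝ) (u : Fin d → ℝ) :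
    Fin d → ℝ :=
  fun i => sSup ((fun q => Sq q (f q) h u i) '' P)

/-- Successive gaps `[t₁ - t₀, …, t_m - t_{m-1}]` of a list `[t₀, …, t_m]`. -/
def listGaps (l : List ℝ) : List ℝ := l.tail.zipWith (· - ·) l

/-- The iterated operator `ℰ_π = ℰ_{t₁-t₀} ∘ … ∘ ℰ_{t_m - t_{m-1}}` associated to a
finite partition `π = {t₀ < t₁ < … < t_m}`. -/
noncomputable def Epart {d : ℕ} (E : ℝ → (Fin d → ℝ) → (Fin d → ℝ))
    (pa : Finset ℝ) : (Fin d → ℝ) → (Fin d → ℝ) :=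
  ((listGaps (pa.sort (· ≤ ·))).map E).foldr (· ∘ ·) id

/-- Finite partitions of `[0, t]` containing `0` and `t`. -/
def partitionsTo (t : ℝ) : Set (Finset ℝ) :=
  {pa | (0 : ℝ) ∈ pa ∧ t ∈ pa ∧ ∀ s ∈ pa, s ∈ Set.Icc (0 : ℝ) t}

/-- The Nisio semigroup `𝒮(t)u = sup_{π ∈ P_t} ℰ_π u` (componentwise sup). -/
noncomputable def NisioS {d : ℕ} (P : Set (Matrix (Fin d) (Fin d) ℝ))
    (f : Matrix (Fin d) (Fin d) ℝ → Fin d → ℝ) (t : ℝ) (u : Fin d → ℝ) :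
    Fin d → ℝ :=
  fun i => sSup ((fun pa => Epart (Eop P f) pa u i) '' partitionsTo t)


section Aux

open NormedSpace

variable {d : ℕ}

open NormedSpace

variable {d : ℕ}

lemma exp_entry_hasSum (M : Matrix (Fin d) (Fin d) ℝ) (i j : Fin d) :
    HasSum (fun n : ℕ => ((n.factorial : ℝ)⁻¹ • M ^ n) i j) (exp M i j) := by
  letI : SeminormedRing (Matrix (Fin d) (Fin d) ℝ) := Matrix.linftyOpSemiNormedRing
  letI : NormedRing (Matrix (Fin d) (Fin d) ℝ) := Matrix.linftyOpNormedRing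
  letI : NormedAlgebra ℝ (Matrix (Fin d) (Fin d) ℝ) := Matrix.linftyOpNormedAlgebra
  have h := NormedSpace.exp_series_hasSum_exp' (𝕂 := ℝ) M
  have hc : Continuous (fun A : Matrix (Fin d) (Fin d) ℝ => A i j) :=
    (continuous_apply j).comp (continuous_apply i)
  exact h.map (⟨⟨fun A => A i j, fun _ _ => rfl⟩, fun _ _ => rfl⟩ :
    Matrix (Fin d) (Fin d) ℝ →ₗ[ℝ] ℝ) hc

lemma pow_entry_nonneg {M : Matrix (Fin d) (Fin d) ℝ} (hM : ∀ i j, 0 ≤ M i j) (n : ℕ) :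
    ∀ i j, 0 ≤ (M ^ n) i j := by
  induction n with
  | zero => intro i j; simp [Matrix.one_apply]; positivity
  | succ n ih =>
      intro i j
      rw [pow_succ, Matrix.mul_apply]
      exact Finset.sum_nonneg fun k _ => mul_nonneg (ih i k) (hM k j)

lemma exp_entry_nonneg {M : Matrix (Fin d) (Fin d) ℝ} (hM : ∀ i j, 0 ≤ M i j) (i j : Fin d) :
    0 ≤ exp M i j := by
  refine hasSum_le (fun n => ?_) hasSum_zero (exp_entry_hasSum M i j)
  have := pow_entry_nonneg hM n i j
  simp only [Matrix.smul_apply, smul_eq_mul]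
  positivity

lemma exp_scalar (c : ℝ) :
    exp (c • (1 : Matrix (Fin d) (Fin d) ℝ)) = Real.exp c • (1 : Matrix (Fin d) (Fin d) ℝ) := by
  letI : SeminormedRing (Matrix (Fin d) (Fin d) ℝ) := Matrix.linftyOpSemiNormedRing
  letI : NormedRing (Matrix (Fin d) (Fin d) ℝ) := Matrix.linftyOpNormedRing
  letI : NormedAlgebra ℝ (Matrix (Fin d) (Fin d) ℝ) := Matrix.linftyOpNormedAlgebra
  letI : NormedAlgebra ℚ (Matrix (Fin d) (Fin d) ℝ) := Matrix.linftyOpNormedAlgebra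
  have h1 : c • (1 : Matrix (Fin d) (Fin d) ℝ) = algebraMap ℝ _ c :=
    (Algebra.algebraMap_eq_smul_one c).symm
  rw [h1]
  have h2 := NormedSpace.algebraMap_exp_comm (𝕂 := ℝ) (𝔸 := Matrix (Fin d) (Fin d) ℝ) c
  refine h2.symm.trans ?_
  rw [Algebra.algebraMap_eq_smul_one,
    Real.exp_eq_exp_ℝ]


lemma exp_smul_entry_nonneg {q : Matrix (Fin d) (Fin d) ℝ} (hq : IsQMatrix q)
    {t : ℝ} (ht : 0 ≤ t) (i j : Fin d) : 0 ≤ exp (t • q) i j := by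
  obtain ⟨hdiag, hoff, -⟩ := hq
  set a : ℝ := ∑ k, |q k k| with ha
  have haN : ∀ i j, 0 ≤ (q + a • (1 : Matrix (Fin d) (Fin d) ℝ)) i j := by
    intro i j
    by_cases hij : i = j
    · subst hij
      simp only [Matrix.add_apply, Matrix.smul_apply, Matrix.one_apply_eq, smul_eq_mul, mul_one]
      have : |q i i| ≤ a := Finset.single_le_sum (f := fun k => |q k k|)
        (fun k _ => abs_nonneg _) (Finset.mem_univ i)
      have := abs_le.1 (le_refl |q i i|) |>.1
      linarith [neg_abs_le (q i i)]
    · simp only [Matrix.add_apply, Matrix.smul_apply, Matrix.one_apply_ne hij, smul_eq_mul,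
        mul_zero, add_zero]
      exact hoff i j hij
  have hsplit : t • q = (-(t * a)) • (1 : Matrix (Fin d) (Fin d) ℝ)
      + t • (q + a • (1 : Matrix (Fin d) (Fin d) ℝ)) := by
    rw [smul_add, smul_smul]; module
  have hcomm : Commute ((-(t * a)) • (1 : Matrix (Fin d) (Fin d) ℝ))
      (t • (q + a • (1 : Matrix (Fin d) (Fin d) ℝ))) := by
    unfold Commute SemiconjBy
    simp [Matrix.smul_mul, Matrix.mul_smul]
  rw [hsplit, Matrix.exp_add_of_commute _ _ hcomm, exp_scalar]
  rw [Matrix.smul_mul, Matrix.one_mul, Matrix.smul_apply, smul_eq_mul]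
  have h2 : ∀ i' j', 0 ≤ (t • (q + a • (1 : Matrix (Fin d) (Fin d) ℝ))) i' j' := by
    intro i' j'
    simpa using mul_nonneg ht (haN i' j')
  exact mul_nonneg (Real.exp_pos _).le (exp_entry_nonneg h2 i j)

lemma exp_rowSum_hasSum (M : Matrix (Fin d) (Fin d) ℝ) (i : Fin d) :
    HasSum (fun n : ℕ => ∑ j, ((n.factorial : ℝ)⁻¹ • M ^ n) i j) (∑ j, exp M i j) :=
  hasSum_sum fun j _ => exp_entry_hasSum M i j

lemma rowSum_pow_eq_zero {M : Matrix (Fin d) (Fin d) ℝ} (hM : ∀ i, ∑ j, M i j = 0) :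
    ∀ n : ℕ, 0 < n → ∀ i, ∑ j, (M ^ n) i j = 0 := by
  intro n hn
  induction n with
  | zero => omega
  | succ n ih =>
      intro i
      rcases Nat.eq_zero_or_pos n with h0 | hpos
      · subst h0; simpa using hM i
      · rw [pow_succ']
        simp only [Matrix.mul_apply]
        rw [Finset.sum_comm]
        simp_rw [← Finset.mul_sum, ih hpos, mul_zero, Finset.sum_const_zero]

lemma exp_rowSum_eq_one {M : Matrix (Fin d) (Fin d) ℝ} (hM : ∀ i, ∑ j, M i j = 0) (i : Fin d) :
    ∑ j, exp M i j = 1 := by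
  have h := exp_rowSum_hasSum M i
  have h2 : HasSum (fun n : ℕ => ∑ j, ((n.factorial : ℝ)⁻¹ • M ^ n) i j)
      ((fun n : ℕ => ∑ j, ((n.factorial : ℝ)⁻¹ • M ^ n) i j) 0) := by
    apply hasSum_single
    intro n hn
    have := rowSum_pow_eq_zero hM n (Nat.pos_of_ne_zero hn) i
    simp only [Matrix.smul_apply, smul_eq_mul, ← Finset.mul_sum, this, mul_zero]
  have := h.unique h2
  rw [this]
  simp [Matrix.one_apply, Finset.sum_ite_eq']


lemma mulVec_mono {A : Matrix (Fin d) (Fin d) ℝ} (hA : ∀ i j, 0 ≤ A i j)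
    {u v : Fin d → ℝ} (huv : u ≤ v) : A.mulVec u ≤ A.mulVec v := by
  intro i
  simp only [Matrix.mulVec, dotProduct]
  exact Finset.sum_le_sum fun j _ => mul_le_mul_of_nonneg_left (huv j) (hA i j)

lemma mulVec_one_eq {A : Matrix (Fin d) (Fin d) ℝ} (hA : ∀ i, ∑ j, A i j = 1) :
    A.mulVec (fun _ => (1:ℝ)) = fun _ => (1:ℝ) := by
  funext i
  simp only [Matrix.mulVec, dotProduct, mul_one]
  exact hA i

lemma exp_cont (q : Matrix (Fin d) (Fin d) ℝ) :
    Continuous (fun s : ℝ => NormedSpace.exp (s • q)) := by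
  letI : SeminormedRing (Matrix (Fin d) (Fin d) ℝ) := Matrix.linftyOpSemiNormedRing
  letI : NormedRing (Matrix (Fin d) (Fin d) ℝ) := Matrix.linftyOpNormedRing
  letI : NormedAlgebra ℝ (Matrix (Fin d) (Fin d) ℝ) := Matrix.linftyOpNormedAlgebra
  letI : NormedAlgebra ℚ (Matrix (Fin d) (Fin d) ℝ) := Matrix.linftyOpNormedAlgebra
  exact NormedSpace.exp_continuous.comp (continuous_id.smul continuous_const)

lemma integrand_cont (q : Matrix (Fin d) (Fin d) ℝ) (f : Fin d → ℝ) :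
    Continuous (fun s : ℝ => (NormedSpace.exp (s • q)).mulVec f) := by
  apply continuous_pi
  intro i
  simp only [Matrix.mulVec, dotProduct]
  apply continuous_finset_sum
  intro j _
  exact (((continuous_apply j).comp ((continuous_apply i).comp (exp_cont q))).mul continuous_const)

lemma Sq_semigroup (q : Matrix (Fin d) (Fin d) ℝ) (f : Fin d → ℝ) (a b : ℝ) (u : Fin d → ℝ) :
    Sq q f (a + b) u = Sq q f a (Sq q f b u) := by
  have hcomm : Commute (a • q) (b • q) := by
    unfold Commute SemiconjBy
    simp [Matrix.smul_mul, Matrix.mul_smul, smul_smul, mul_comm]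
  have hexp : NormedSpace.exp ((a + b) • q)
      = NormedSpace.exp (a • q) * NormedSpace.exp (b • q) := by
    rw [add_smul, Matrix.exp_add_of_commute _ _ hcomm]
  have hint : ∀ (c e : ℝ), IntervalIntegrable
      (fun s : ℝ => (NormedSpace.exp (s • q)).mulVec f) MeasureTheory.volume c e :=
    fun c e => (integrand_cont q f).intervalIntegrable c e
  -- the continuous linear map v ↦ exp(a•q).mulVec v
  let L : (Fin d → ℝ) →L[ℝ] (Fin d → ℝ) :=
    LinearMap.toContinuousLinearMap ((NormedSpace.exp (a • q)).mulVecLin)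
  have hL : ∀ v, L v = (NormedSpace.exp (a • q)).mulVec v := fun v => rfl
  unfold Sq
  rw [hexp, ← Matrix.mulVec_mulVec]
  have key : (∫ s in (0:ℝ)..(a+b), (NormedSpace.exp (s • q)).mulVec f)
      = (∫ s in (0:ℝ)..a, (NormedSpace.exp (s • q)).mulVec f)
        + (NormedSpace.exp (a • q)).mulVec (∫ s in (0:ℝ)..b, (NormedSpace.exp (s • q)).mulVec f) := by
    rw [← intervalIntegral.integral_add_adjacent_intervals (a := (0:ℝ)) (b := a) (c := a + b)
      (hint 0 a) (hint a (a+b))]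
    congr 1
    rw [← hL, ← ContinuousLinearMap.intervalIntegral_comp_comm _ (hint 0 b)]
    have : ∀ s : ℝ, L ((NormedSpace.exp (s • q)).mulVec f)
        = (NormedSpace.exp ((a + s) • q)).mulVec f := by
      intro s
      rw [hL, Matrix.mulVec_mulVec, ← Matrix.exp_add_of_commute _ _ (by
        unfold Commute SemiconjBy
        simp [Matrix.smul_mul, Matrix.mul_smul, smul_smul, mul_comm]), ← add_smul]
    simp_rw [this]
    rw [intervalIntegral.integral_comp_add_left (fun s => (NormedSpace.exp (s • q)).mulVec f) a]
    simp
  rw [key]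
  rw [Matrix.mulVec_add]
  abel


lemma listGaps_nil : listGaps [] = [] := rfl
lemma listGaps_single (a : ℝ) : listGaps [a] = [] := rfl
lemma listGaps_cons2 (a b : ℝ) (l : List ℝ) :
    listGaps (a :: b :: l) = (b - a) :: listGaps (b :: l) := rfl

lemma listGaps_nonneg : ∀ {l : List ℝ}, l.Pairwise (· ≤ ·) → ∀ g ∈ listGaps l, 0 ≤ g
  | [], _, g, hg => by simp [listGaps_nil] at hg
  | [a], _, g, hg => by simp [listGaps_single] at hg
  | a :: b :: l, h, g, hg => by
      rw [listGaps_cons2] at hg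
      rcases List.mem_cons.1 hg with h1 | h2
      · have hab : a ≤ b := (List.pairwise_cons.1 h).1 b (by simp)
        simp [h1]; linarith
      · exact listGaps_nonneg (List.pairwise_cons.1 h).2 g h2

lemma listGaps_map_add (s : ℝ) : ∀ l : List ℝ, listGaps (l.map (s + ·)) = listGaps l
  | [] => rfl
  | [a] => rfl
  | a :: b :: l => by
      have := listGaps_map_add s (b :: l)
      simp only [List.map_cons] at this ⊢
      rw [listGaps_cons2, listGaps_cons2, this]
      ring_nf

lemma listGaps_append : ∀ (l₁ l₂ : List ℝ) (h₁ : l₁ ≠ []) (h₂ : l₂ ≠ []),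
    l₁.getLast h₁ = l₂.head h₂ →
    listGaps (l₁ ++ l₂.tail) = listGaps l₁ ++ listGaps l₂
  | [], _, h₁, _, _ => absurd rfl h₁
  | [a], l₂, _, h₂, h => by
      rcases l₂ with _ | ⟨b, t⟩
      · exact absurd rfl h₂
      · simp only [List.getLast_singleton, List.head_cons] at h
        subst h
        simp [listGaps_single]
  | a :: b :: l₁, l₂, h₁, h₂, h => by
      have h' : (b :: l₁).getLast (by simp) = l₂.head h₂ := by
        rw [← h]; exact (List.getLast_cons (by simp)).symm
      have IH := listGaps_append (b :: l₁) l₂ (by simp) h₂ h'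
      have : (a :: b :: l₁) ++ l₂.tail = a :: ((b :: l₁) ++ l₂.tail) := by simp
      rw [this]
      have hcons : (b :: l₁) ++ l₂.tail = b :: (l₁ ++ l₂.tail) := by simp
      rw [hcons, listGaps_cons2, ← hcons, IH, listGaps_cons2]
      simp

noncomputable def Eol (E : ℝ → (Fin d → ℝ) → (Fin d → ℝ)) (gs : List ℝ) :
    (Fin d → ℝ) → (Fin d → ℝ) := (gs.map E).foldr (· ∘ ·) id

lemma Eol_nil (E : ℝ → (Fin d → ℝ) → (Fin d → ℝ)) : Eol E [] = id := rfl
lemma Eol_cons (E : ℝ → (Fin d → ℝ) → (Fin d → ℝ)) (g : ℝ) (gs : List ℝ) :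
    Eol E (g :: gs) = E g ∘ Eol E gs := rfl
lemma Eol_append (E : ℝ → (Fin d → ℝ) → (Fin d → ℝ)) (gs₁ gs₂ : List ℝ) :
    Eol E (gs₁ ++ gs₂) = Eol E gs₁ ∘ Eol E gs₂ := by
  unfold Eol
  rw [List.map_append, List.foldr_append]
  induction gs₁ with
  | nil => rfl
  | cons g gs ih => simp_all [List.map_cons, List.foldr_cons, Function.comp_assoc]

section Abstract

variable {E : ℝ → (Fin d → ℝ) → (Fin d → ℝ)}
variable (Hmono : ∀ g : ℝ, 0 ≤ g → ∀ u v : Fin d → ℝ, u ≤ v → E g u ≤ E g v)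
variable (Hsub : ∀ a b : ℝ, 0 ≤ a → 0 ≤ b → ∀ u : Fin d → ℝ, E (a + b) u ≤ E a (E b u))
variable (Hshift : ∀ g : ℝ, 0 ≤ g → ∀ (u : Fin d → ℝ) (c : ℝ), 0 ≤ c →
    E g (u + fun _ => c) ≤ E g u + fun _ => c)

include Hmono in
lemma Eol_mono : ∀ gs : List ℝ, (∀ g ∈ gs, 0 ≤ g) → ∀ u v : Fin d → ℝ, u ≤ v →
    Eol E gs u ≤ Eol E gs v
  | [], _, u, v, huv => huv
  | g :: gs, hgs, u, v, huv => by
      rw [Eol_cons]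
      exact Hmono g (hgs g (by simp)) _ _
        (Eol_mono gs (fun g' hg' => hgs g' (by simp [hg'])) u v huv)

include Hmono Hshift in
lemma Eol_shift : ∀ gs : List ℝ, (∀ g ∈ gs, 0 ≤ g) → ∀ (u : Fin d → ℝ) (c : ℝ), 0 ≤ c →
    Eol E gs (u + fun _ => c) ≤ Eol E gs u + fun _ => c
  | [], _, u, c, hc => le_refl _
  | g :: gs, hgs, u, c, hc => by
      rw [Eol_cons]
      calc E g (Eol E gs (u + fun _ => c))
          ≤ E g (Eol E gs u + fun _ => c) := Hmono g (hgs g (by simp)) _ _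
            (Eol_shift gs (fun g' hg' => hgs g' (by simp [hg'])) u c hc)
        _ ≤ E g (Eol E gs u) + fun _ => c := Hshift g (hgs g (by simp)) _ c hc

include Hmono Hsub in
lemma Eol_orderedInsert :
    ∀ l : List ℝ, l.Pairwise (· ≤ ·) → ∀ r : ℝ, r ∉ l → (∃ a ∈ l, a ≤ r) → (∃ b ∈ l, r ≤ b) →
    ∀ u : Fin d → ℝ, Eol E (listGaps l) u ≤ Eol E (listGaps (l.orderedInsert (· ≤ ·) r)) u
  | [], _, r, _, ha, _, _ => by simp at ha
  | a :: l', hsort, r, hr, ha, hb, u => by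
      have har : a < r := by
        rcases ha with ⟨a', ha', hle⟩
        have haa' : a ≤ a' := by
          rcases List.mem_cons.1 ha' with h | hmem
          · exact le_of_eq h.symm
          · exact (List.pairwise_cons.1 hsort).1 a' hmem
        rcases lt_or_eq_of_le (le_trans haa' hle) with h | h
        · exact h
        · exact (hr (by rw [← h]; exact List.mem_cons_self)).elim
      have hoi : (a :: l').orderedInsert (· ≤ ·) r = a :: l'.orderedInsert (· ≤ ·) r := by
        simp [List.orderedInsert, not_le.2 har]
      rw [hoi]
      rcases l' with _ | ⟨b, l''⟩
      · rcases hb with ⟨b, hbmem, hrb⟩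
        simp only [List.mem_singleton] at hbmem
        subst hbmem
        exact absurd hrb (not_le.2 har)
      · by_cases hrb : r ≤ b
        · have hoi2 : (b :: l'').orderedInsert (· ≤ ·) r = r :: b :: l'' := by
            simp [List.orderedInsert, hrb]
          rw [hoi2, listGaps_cons2, listGaps_cons2, listGaps_cons2, Eol_cons, Eol_cons, Eol_cons]
          have hba : b - a = (r - a) + (b - r) := by ring
          simp only [Function.comp_apply]
          calc E (b - a) (Eol E (listGaps (b :: l'')) u)
              = E ((r - a) + (b - r)) (Eol E (listGaps (b :: l'')) u) := by rw [← hba]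
            _ ≤ E (r - a) (E (b - r) (Eol E (listGaps (b :: l'')) u)) :=
                Hsub _ _ (by linarith) (by linarith) _
        · have hbr : b < r := not_le.1 hrb
          have hsort' : (b :: l'').Pairwise (· ≤ ·) := (List.pairwise_cons.1 hsort).2
          have hr' : r ∉ b :: l'' := fun h => hr (List.mem_cons_of_mem a h)
          have ha' : ∃ x ∈ b :: l'', x ≤ r := ⟨b, by simp, hbr.le⟩
          have hb' : ∃ x ∈ b :: l'', r ≤ x := by
            rcases hb with ⟨b₀, hb₀, hrb₀⟩
            rcases List.mem_cons.1 hb₀ with rfl | hmem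
            · exact absurd hrb₀ (not_le.2 har)
            · exact ⟨b₀, hmem, hrb₀⟩
          have IH := Eol_orderedInsert (b :: l'') hsort' r hr' ha' hb' u
          have hoi3 : (b :: l'').orderedInsert (· ≤ ·) r = b :: l''.orderedInsert (· ≤ ·) r := by
            simp [List.orderedInsert, hrb]
          rw [hoi3] at IH ⊢
          rw [listGaps_cons2, listGaps_cons2, Eol_cons, Eol_cons]
          simp only [Function.comp_apply]
          rw [← hoi3] at IH
          have hab : a ≤ b := (List.pairwise_cons.1 hsort).1 b (by simp)
          exact Hmono (b - a) (by linarith) _ _ (by rw [hoi3] at IH; exact IH)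

end Abstract

-- uniqueness of sorted lists
lemma sort_eq_of_sorted_nodup (pa : Finset ℝ) (l : List ℝ) (hs : l.Pairwise (· ≤ ·))
    (hn : l.Nodup) (hf : l.toFinset = pa) : pa.sort (· ≤ ·) = l := by
  classical
  apply List.Perm.eq_of_pairwise' (Finset.pairwise_sort _ _) hs
  apply List.perm_of_nodup_nodup_toFinset_eq (Finset.sort_nodup _ _) hn
  rw [Finset.sort_toFinset, hf]

lemma sort_insert_eq (pa : Finset ℝ) (r : ℝ) (hr : r ∉ pa) :
    (insert r pa).sort (· ≤ ·) = (pa.sort (· ≤ ·)).orderedInsert (· ≤ ·) r := by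
  classical
  apply sort_eq_of_sorted_nodup
  · exact (Finset.pairwise_sort pa (· ≤ ·)).orderedInsert r _
  · have hperm := List.perm_orderedInsert (· ≤ ·) r (pa.sort (· ≤ ·))
    refine hperm.nodup_iff.2 ?_
    exact List.nodup_cons.2 ⟨by simpa using hr, Finset.sort_nodup _ _⟩
  · have hperm := List.perm_orderedInsert (· ≤ ·) r (pa.sort (· ≤ ·))
    ext x
    rw [List.mem_toFinset, hperm.mem_iff]
    simp [Finset.mem_insert, Finset.mem_sort]

lemma sort_image_add (pa : Finset ℝ) (s : ℝ) :
    (pa.image (s + ·)).sort (· ≤ ·) = (pa.sort (· ≤ ·)).map (s + ·) := by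
  classical
  apply sort_eq_of_sorted_nodup
  · exact List.Pairwise.map _ (fun a b h => by simpa using h) (Finset.pairwise_sort pa (· ≤ ·))
  · exact (Finset.sort_nodup _ _).map (fun a b h => by simpa using h)
  · ext x
    simp only [List.mem_toFinset, Finset.mem_image, List.mem_map, Finset.mem_sort]

lemma sorted_le_getLast : ∀ {l : List ℝ}, l.Pairwise (· ≤ ·) → ∀ (h : l ≠ []) (a : ℝ), a ∈ l →
    a ≤ l.getLast h
  | [], _, h, _, _ => absurd rfl h
  | [x], _, _, a, ha => by simp at ha; simp [ha]
  | x :: y :: t, hs, h, a, ha => by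
      have hrec := sorted_le_getLast (l := y :: t) (List.pairwise_cons.1 hs).2 (by simp)
      rw [List.getLast_cons (l := y :: t) (by simp)]
      rcases List.mem_cons.1 ha with rfl | hmem
      · exact le_trans ((List.pairwise_cons.1 hs).1 y (by simp)) (hrec y (by simp))
      · exact hrec a hmem

lemma sorted_head_le {l : List ℝ} (hs : l.Pairwise (· ≤ ·)) (h : l ≠ []) {a : ℝ} (ha : a ∈ l) :
    l.head h ≤ a := by
  rcases l with _ | ⟨x, t⟩
  · exact absurd rfl h
  · rcases List.mem_cons.1 ha with rfl | hmem
    · simp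
    · exact (List.pairwise_cons.1 hs).1 a hmem

lemma sort_getLast_eq {π : Finset ℝ} {s : ℝ} (hmem : s ∈ π) (hub : ∀ x ∈ π, x ≤ s)
    (h : π.sort (· ≤ ·) ≠ []) : (π.sort (· ≤ ·)).getLast h = s :=
  le_antisymm (hub _ ((Finset.mem_sort _).1 (List.getLast_mem h)))
    (sorted_le_getLast (Finset.pairwise_sort _ _) h s ((Finset.mem_sort _).2 hmem))

lemma sort_head_eq {π : Finset ℝ} {s : ℝ} (hmem : s ∈ π) (hlb : ∀ x ∈ π, s ≤ x)
    (h : π.sort (· ≤ ·) ≠ []) : (π.sort (· ≤ ·)).head h = s :=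
  le_antisymm (sorted_head_le (Finset.pairwise_sort _ _) h ((Finset.mem_sort _).2 hmem))
    (hlb _ ((Finset.mem_sort _).1 (List.head_mem h)))

lemma sort_ne_nil {π : Finset ℝ} {s : ℝ} (hmem : s ∈ π) : π.sort (· ≤ ·) ≠ [] := by
  intro h
  have : s ∈ π.sort (· ≤ ·) := (Finset.mem_sort _).2 hmem
  rw [h] at this
  exact absurd this List.not_mem_nil

lemma sort_union (π₁ B : Finset ℝ) (s : ℝ)
    (hmax : s ∈ π₁) (hub : ∀ x ∈ π₁, x ≤ s)
    (hmin : s ∈ B) (hlb : ∀ x ∈ B, s ≤ x) :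
    (π₁ ∪ B).sort (· ≤ ·) = π₁.sort (· ≤ ·) ++ (B.sort (· ≤ ·)).tail := by
  classical
  set L₁ := π₁.sort (· ≤ ·) with hL₁
  set L₂ := B.sort (· ≤ ·) with hL₂
  have hL₂ne : L₂ ≠ [] := sort_ne_nil hmin
  have hhead : L₂.head hL₂ne = s := sort_head_eq hmin hlb _
  have hL₂eq : s :: L₂.tail = L₂ := by rw [← hhead]; exact List.cons_head_tail _
  have htail_mem : ∀ x ∈ L₂.tail, x ∈ B := fun x hx =>
    (Finset.mem_sort _).1 (List.mem_of_mem_tail hx)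
  have hs_not_tail : s ∉ L₂.tail := by
    intro hmem2
    have hnodup : L₂.Nodup := Finset.sort_nodup _ _
    rw [← hL₂eq] at hnodup
    exact (List.nodup_cons.1 hnodup).1 hmem2
  apply sort_eq_of_sorted_nodup
  · refine List.pairwise_append.2 ⟨Finset.pairwise_sort _ _, ?_, ?_⟩
    · have : L₂.Pairwise (· ≤ ·) := Finset.pairwise_sort _ _
      rw [← hL₂eq] at this
      exact (List.pairwise_cons.1 this).2
    · intro a ha b hb
      exact le_trans (hub a ((Finset.mem_sort _).1 ha)) (hlb b (htail_mem b hb))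
  · refine List.nodup_append.2 ⟨Finset.sort_nodup _ _, ?_, ?_⟩
    · have : L₂.Nodup := Finset.sort_nodup _ _
      rw [← hL₂eq] at this
      exact (List.nodup_cons.1 this).2
    · intro a ha b' hb hab
      subst hab
      have h1 : a ≤ s := hub a ((Finset.mem_sort _).1 ha)
      have h2 : s ≤ a := hlb a (htail_mem a hb)
      have : a = s := le_antisymm h1 h2
      exact hs_not_tail (this ▸ hb)
  · ext x
    simp only [List.toFinset_append, Finset.mem_union, List.mem_toFinset, Finset.mem_sort]
    constructor
    · rintro (h | h)
      · exact Or.inl ((Finset.mem_sort _).1 h)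
      · exact Or.inr (htail_mem x h)
    · rintro (h | h)
      · exact Or.inl ((Finset.mem_sort _).2 h)
      · rcases eq_or_ne x s with rfl | hne
        · exact Or.inl ((Finset.mem_sort _).2 hmax)
        · right
          have : x ∈ L₂ := (Finset.mem_sort _).2 h
          rw [← hL₂eq] at this
          rcases List.mem_cons.1 this with h' | h'
          · exact absurd h' hne
          · exact h'

end Aux

section Main

open NormedSpace

variable {d : ℕ} {P : Set (Matrix (Fin d) (Fin d) ℝ)}
  {f : Matrix (Fin d) (Fin d) ℝ → Fin d → ℝ}

lemma exp_smul_stochastic {q : Matrix (Fin d) (Fin d) ℝ} (hq : IsQMatrix q) (h : ℝ) (i : Fin d) :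
    ∑ j, (exp (h • q)) i j = 1 :=
  exp_rowSum_eq_one (fun i' => by
    simp only [Matrix.smul_apply, smul_eq_mul, ← Finset.mul_sum, hq.2.2 i', mul_zero]) i

lemma Sq_mono {q : Matrix (Fin d) (Fin d) ℝ} (hq : IsQMatrix q) (g : Fin d → ℝ) {h : ℝ}
    (hh : 0 ≤ h) {u v : Fin d → ℝ} (huv : u ≤ v) : Sq q g h u ≤ Sq q g h v :=
  add_le_add_left (mulVec_mono (exp_smul_entry_nonneg hq hh) huv) _

lemma Sq_shift {q : Matrix (Fin d) (Fin d) ℝ} (hq : IsQMatrix q) (g : Fin d → ℝ) (h : ℝ)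
    (u : Fin d → ℝ) (c : ℝ) : Sq q g h (u + fun _ => c) = Sq q g h u + fun _ => c := by
  unfold Sq
  have h1 : (exp (h • q)).mulVec (u + fun _ => c)
      = (exp (h • q)).mulVec u + fun _ => c := by
    rw [Matrix.mulVec_add]
    congr 1
    have : (fun _ : Fin d => c) = c • (fun _ : Fin d => (1:ℝ)) := by funext j; simp
    rw [this, Matrix.mulVec_smul, mulVec_one_eq (exp_smul_stochastic hq h)]
  rw [h1]
  abel

section Ops

variable (hne : P.Nonempty) (hQ : ∀ q ∈ P, IsQMatrix q)
  (hEfin : ∀ h : ℝ, 0 ≤ h → ∀ (u : Fin d → ℝ) (i : Fin d),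
      BddAbove ((fun q => Sq q (f q) h u i) '' P))

include hEfin in
lemma Sq_le_Eop {q : Matrix (Fin d) (Fin d) ℝ} (hq : q ∈ P) {h : ℝ} (hh : 0 ≤ h)
    (u : Fin d → ℝ) : Sq q (f q) h u ≤ Eop P f h u :=
  fun i => le_csSup (hEfin h hh u i) ⟨q, hq, rfl⟩

include hne in
lemma Eop_le {h : ℝ} {u : Fin d → ℝ} {i : Fin d} {c : ℝ}
    (hc : ∀ q ∈ P, Sq q (f q) h u i ≤ c) : Eop P f h u i ≤ c :=
  csSup_le (hne.image _) (by rintro x ⟨q, hq, rfl⟩; exact hc q hq)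

include hne hQ hEfin in
lemma Eop_mono {h : ℝ} (hh : 0 ≤ h) {u v : Fin d → ℝ} (huv : u ≤ v) :
    Eop P f h u ≤ Eop P f h v := fun i =>
  Eop_le hne fun q hq =>
    le_trans (Sq_mono (hQ q hq) (f q) hh huv i) (Sq_le_Eop hEfin hq hh v i)

include hne hQ hEfin in
lemma Eop_sub {a b : ℝ} (ha : 0 ≤ a) (hb : 0 ≤ b) (u : Fin d → ℝ) :
    Eop P f (a + b) u ≤ Eop P f a (Eop P f b u) := fun i =>
  Eop_le hne fun q hq => by
    rw [Sq_semigroup]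
    exact le_trans
      (Sq_mono (hQ q hq) (f q) ha (Sq_le_Eop hEfin hq hb u) i)
      (Sq_le_Eop hEfin hq ha (Eop P f b u) i)

include hne hQ hEfin in
lemma Eop_shift {h : ℝ} (hh : 0 ≤ h) (u : Fin d → ℝ) {c : ℝ} (hc : 0 ≤ c) :
    Eop P f h (u + fun _ => c) ≤ Eop P f h u + fun _ => c := fun i =>
  Eop_le hne fun q hq => by
    rw [Sq_shift (hQ q hq)]
    exact add_le_add_left (Sq_le_Eop hEfin hq hh u i) c

-- gap facts for partitions
lemma gaps_nonneg (pa : Finset ℝ) : ∀ g ∈ listGaps (pa.sort (· ≤ ·)), 0 ≤ g :=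
  listGaps_nonneg (Finset.pairwise_sort _ _)

lemma Epart_eq_Eol (E : ℝ → (Fin d → ℝ) → (Fin d → ℝ)) (pa : Finset ℝ) :
    Epart E pa = Eol E (listGaps (pa.sort (· ≤ ·))) := rfl

include hne hQ hEfin in
lemma Epart_mono (pa : Finset ℝ) {u v : Fin d → ℝ} (huv : u ≤ v) :
    Epart (Eop P f) pa u ≤ Epart (Eop P f) pa v := by
  rw [Epart_eq_Eol]
  exact Eol_mono (fun g hg u v huv => Eop_mono hne hQ hEfin hg huv) _ (gaps_nonneg pa) u v huv

include hne hQ hEfin in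
lemma Epart_shift (pa : Finset ℝ) (u : Fin d → ℝ) {c : ℝ} (hc : 0 ≤ c) :
    Epart (Eop P f) pa (u + fun _ => c) ≤ Epart (Eop P f) pa u + fun _ => c := by
  rw [Epart_eq_Eol]
  exact Eol_shift (fun g hg u v huv => Eop_mono hne hQ hEfin hg huv)
    (fun g hg u' c' hc' => Eop_shift hne hQ hEfin hg u' hc') _ (gaps_nonneg pa) u c hc

include hne hQ hEfin in
lemma Epart_le_insert (pc : Finset ℝ) (r : ℝ)
    (ha : ∃ a ∈ pc, a ≤ r) (hb : ∃ b ∈ pc, r ≤ b) (u : Fin d → ℝ) :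
    Epart (Eop P f) pc u ≤ Epart (Eop P f) (insert r pc) u := by
  classical
  by_cases hr : r ∈ pc
  · rw [Finset.insert_eq_self.2 hr]
  · rw [Epart_eq_Eol, Epart_eq_Eol, sort_insert_eq pc r hr]
    refine Eol_orderedInsert (fun g hg u v huv => Eop_mono hne hQ hEfin hg huv)
      (fun a b ha' hb' u' => Eop_sub hne hQ hEfin ha' hb' u') _
      (Finset.pairwise_sort _ _) r (by simpa using hr) ?_ ?_ u
    · rcases ha with ⟨a, hamem, hale⟩
      exact ⟨a, (Finset.mem_sort _).2 hamem, hale⟩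
    · rcases hb with ⟨b, hbmem, hble⟩
      exact ⟨b, (Finset.mem_sort _).2 hbmem, hble⟩

include hne hQ hEfin in
lemma Epart_le_union_sub {t : ℝ} (ht : 0 ≤ t) (pa : Finset ℝ) (hpa : pa ∈ partitionsTo t)
    (s : Finset ℝ) (hs : ∀ r ∈ s, r ∈ Set.Icc (0:ℝ) t) (u : Fin d → ℝ) :
    Epart (Eop P f) pa u ≤ Epart (Eop P f) (pa ∪ s) u := by
  classical
  induction s using Finset.induction_on with
  | empty => rw [Finset.union_empty]
  | @insert r s hrs ih =>
      have hs' : ∀ r' ∈ s, r' ∈ Set.Icc (0:ℝ) t := fun r' hr' => hs r' (by simp [hr'])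
      have hr : r ∈ Set.Icc (0:ℝ) t := hs r (by simp)
      calc Epart (Eop P f) pa u ≤ Epart (Eop P f) (pa ∪ s) u := ih hs'
        _ ≤ Epart (Eop P f) (insert r (pa ∪ s)) u := by
            refine Epart_le_insert hne hQ hEfin _ r ⟨0, ?_, hr.1⟩ ⟨t, ?_, hr.2⟩ u
            · exact Finset.mem_union_left _ hpa.1
            · exact Finset.mem_union_left _ hpa.2.1
        _ = Epart (Eop P f) (pa ∪ insert r s) u := by rw [Finset.union_insert]

include hne hQ hEfin in
lemma Epart_mono_subset {t : ℝ} (ht : 0 ≤ t) {pa pb : Finset ℝ} (hpa : pa ∈ partitionsTo t)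
    (hpb : pb ∈ partitionsTo t) (hsub : pa ⊆ pb) (u : Fin d → ℝ) :
    Epart (Eop P f) pa u ≤ Epart (Eop P f) pb u := by
  classical
  have := Epart_le_union_sub hne hQ hEfin ht pa hpa (pb \ pa)
    (fun r hr => hpb.2.2 r (Finset.mem_sdiff.1 hr).1) u
  rwa [Finset.union_sdiff_of_subset hsub] at this

end Ops

end Main

section Final

variable {d : ℕ} {P : Set (Matrix (Fin d) (Fin d) ℝ)}
  {f : Matrix (Fin d) (Fin d) ℝ → Fin d → ℝ}

lemma pair_mem_partitionsTo {t : ℝ} (ht : 0 ≤ t) :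
    ({0, t} : Finset ℝ) ∈ partitionsTo t := by
  refine ⟨by simp, by simp, ?_⟩
  intro x hx
  rcases Finset.mem_insert.1 hx with rfl | hx
  · exact ⟨le_refl 0, ht⟩
  · rw [Finset.mem_singleton] at hx
    subst hx
    exact ⟨ht, le_rfl⟩

lemma union_mem_partitionsTo {s t : ℝ} (hs : 0 ≤ s) (ht : 0 ≤ t)
    {π₁ π₂ : Finset ℝ} (hp1 : π₁ ∈ partitionsTo s) (hp2 : π₂ ∈ partitionsTo t) :
    π₁ ∪ π₂.image (s + ·) ∈ partitionsTo (s + t) := by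
  classical
  refine ⟨Finset.mem_union_left _ hp1.1, ?_, ?_⟩
  · refine Finset.mem_union_right _ (Finset.mem_image.2 ⟨t, hp2.2.1, rfl⟩)
  · intro x hx
    rcases Finset.mem_union.1 hx with hx | hx
    · have := hp1.2.2 x hx
      exact ⟨this.1, by linarith [this.2]⟩
    · rcases Finset.mem_image.1 hx with ⟨y, hy, rfl⟩
      have hy' := hp2.2.2 y hy
      have hgoal : (0:ℝ) ≤ s + y ∧ s + y ≤ s + t := ⟨by linarith [hy'.1], by linarith [hy'.2]⟩
      simpa [Set.mem_Icc] using hgoal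

lemma Epart_union_split {s t : ℝ} (hs : 0 ≤ s) (ht : 0 ≤ t)
    {π₁ π₂ : Finset ℝ} (hp1 : π₁ ∈ partitionsTo s) (hp2 : π₂ ∈ partitionsTo t)
    (E : ℝ → (Fin d → ℝ) → (Fin d → ℝ)) (u : Fin d → ℝ) :
    Epart E (π₁ ∪ π₂.image (s + ·)) u = Epart E π₁ (Epart E π₂ u) := by
  classical
  set B := π₂.image (s + ·) with hB
  have hsB : s ∈ B := Finset.mem_image.2 ⟨0, hp2.1, by simp⟩
  have hlbB : ∀ x ∈ B, s ≤ x := by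
    rintro x hx
    rcases Finset.mem_image.1 hx with ⟨y, hy, rfl⟩
    have := (hp2.2.2 y hy).1
    simp; linarith
  have hsπ₁ : s ∈ π₁ := hp1.2.1
  have hubπ₁ : ∀ x ∈ π₁, x ≤ s := fun x hx => (hp1.2.2 x hx).2
  have hsort := sort_union π₁ B s hsπ₁ hubπ₁ hsB hlbB
  have hne1 : π₁.sort (· ≤ ·) ≠ [] := sort_ne_nil hsπ₁
  have hne2 : B.sort (· ≤ ·) ≠ [] := sort_ne_nil hsB
  have hlast : (π₁.sort (· ≤ ·)).getLast hne1 = s := sort_getLast_eq hsπ₁ hubπ₁ _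
  have hhead : (B.sort (· ≤ ·)).head hne2 = s := sort_head_eq hsB hlbB _
  have hgaps : listGaps ((π₁ ∪ B).sort (· ≤ ·))
      = listGaps (π₁.sort (· ≤ ·)) ++ listGaps (B.sort (· ≤ ·)) := by
    rw [hsort]
    exact listGaps_append _ _ hne1 hne2 (hlast.trans hhead.symm)
  have hgB : listGaps (B.sort (· ≤ ·)) = listGaps (π₂.sort (· ≤ ·)) := by
    rw [hB, sort_image_add, listGaps_map_add]
  rw [Epart_eq_Eol, hgaps, Eol_append, hgB]
  rfl

lemma NisioS_image_nonempty {t : ℝ} (ht : 0 ≤ t) (u : Fin d → ℝ) (i : Fin d) :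
    ((fun pa => Epart (Eop P f) pa u i) '' partitionsTo t).Nonempty :=
  ⟨_, ⟨{0, t}, pair_mem_partitionsTo ht, rfl⟩⟩

end Final

section Approx

variable {d : ℕ} {P : Set (Matrix (Fin d) (Fin d) ℝ)}
  {f : Matrix (Fin d) (Fin d) ℝ → Fin d → ℝ}
  (hne : P.Nonempty) (hQ : ∀ q ∈ P, IsQMatrix q)
  (hEfin : ∀ h : ℝ, 0 ≤ h → ∀ (u : Fin d → ℝ) (i : Fin d),
      BddAbove ((fun q => Sq q (f q) h u i) '' P))
  (hSfin : ∀ t : ℝ, 0 ≤ t → ∀ (u : Fin d → ℝ) (i : Fin d),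
      BddAbove ((fun pa => Epart (Eop P f) pa u i) '' partitionsTo t))

include hSfin in
lemma Epart_le_NisioS {t : ℝ} (ht : 0 ≤ t) {pa : Finset ℝ} (hpa : pa ∈ partitionsTo t)
    (u : Fin d → ℝ) : Epart (Eop P f) pa u ≤ NisioS P f t u :=
  fun i => le_csSup (hSfin t ht u i) ⟨pa, hpa, rfl⟩

include hne hQ hEfin hSfin in
lemma exists_partition_close {t : ℝ} (ht : 0 ≤ t) (u : Fin d → ℝ) {ε : ℝ} (hε : 0 < ε) :
    ∃ pa ∈ partitionsTo t, ∀ i, NisioS P f t u i ≤ Epart (Eop P f) pa u i + ε := by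
  classical
  have hpick : ∀ i : Fin d, ∃ pa ∈ partitionsTo t,
      NisioS P f t u i - ε < Epart (Eop P f) pa u i := by
    intro i
    have hlt : NisioS P f t u i - ε < sSup ((fun pa => Epart (Eop P f) pa u i) '' partitionsTo t) := by
      show _ < NisioS P f t u i
      linarith
    obtain ⟨x, ⟨pa, hpa, rfl⟩, hx⟩ := exists_lt_of_lt_csSup (NisioS_image_nonempty ht u i) hlt
    exact ⟨pa, hpa, hx⟩
  choose pa_ hpa_ hval_ using hpick
  set pb : Finset ℝ := {0, t} ∪ Finset.univ.sup pa_ with hpb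
  have hsub : ∀ i, pa_ i ⊆ pb := by
    intro i x hx
    exact Finset.mem_union_right _ (Finset.mem_sup.2 ⟨i, Finset.mem_univ i, hx⟩)
  have hpbmem : pb ∈ partitionsTo t := by
    refine ⟨Finset.mem_union_left _ (by simp), Finset.mem_union_left _ (by simp), ?_⟩
    intro x hx
    rcases Finset.mem_union.1 hx with hx | hx
    · exact (pair_mem_partitionsTo ht).2.2 x hx
    · rcases Finset.mem_sup.1 hx with ⟨i, -, hx⟩
      exact (hpa_ i).2.2 x hx
  refine ⟨pb, hpbmem, fun i => ?_⟩
  have h1 := Epart_mono_subset hne hQ hEfin ht (hpa_ i) hpbmem (hsub i) u i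
  have h2 := hval_ i
  linarith

end Approx

/-- The dynamic programming principle for the Nisio semigroup. -/
theorem nisio_semigroup_property {d : ℕ} (hd : 0 < d)
    (P : Set (Matrix (Fin d) (Fin d) ℝ)) (hne : P.Nonempty)
    (hQ : ∀ q ∈ P, IsQMatrix q)
    (f : Matrix (Fin d) (Fin d) ℝ → Fin d → ℝ)
    (hf0 : ∀ q ∈ P, f q ≤ 0)
    (hq₀ : ∃ q₀ ∈ P, f q₀ = 0)
    (hEfin : ∀ h : ℝ, 0 ≤ h → ∀ (u : Fin d → ℝ) (i : Fin d),
      BddAbove ((fun q => Sq q (f q) h u i) '' P))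
    (hSfin : ∀ t : ℝ, 0 ≤ t → ∀ (u : Fin d → ℝ) (i : Fin d),
      BddAbove ((fun pa => Epart (Eop P f) pa u i) '' partitionsTo t)) :
    (∀ u : Fin d → ℝ, NisioS P f 0 u = u) ∧
    (∀ s t : ℝ, 0 ≤ s → 0 ≤ t → ∀ u : Fin d → ℝ,
      NisioS P f (s + t) u = NisioS P f s (NisioS P f t u)) := by
  classical
  constructor
  · -- S(0) = id
    intro u
    have hpart : partitionsTo (0:ℝ) = {({0} : Finset ℝ)} := by
      ext pa
      simp only [partitionsTo, Set.mem_setOf_eq, Set.mem_singleton_iff]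
      constructor
      · rintro ⟨h0, -, hsub⟩
        apply Finset.ext
        intro x
        simp only [Finset.mem_singleton]
        constructor
        · intro hx
          have := hsub x hx
          simpa using this
        · rintro rfl; exact h0
      · rintro rfl
        exact ⟨Finset.mem_singleton_self 0, Finset.mem_singleton_self 0, by
          intro x hx
          rw [Finset.mem_singleton] at hx
          simp [hx]⟩
    funext i
    show sSup ((fun pa => Epart (Eop P f) pa u i) '' partitionsTo 0) = u i
    rw [hpart, Set.image_singleton]
    have hE : Epart (Eop P f) {0} u = u := by
      unfold Epart
      rw [Finset.sort_singleton]
      rfl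
    rw [hE, csSup_singleton]
  · intro s t hs ht u
    funext i
    apply le_antisymm
    · -- S(s+t) ≤ S(s) S(t)
      apply csSup_le (NisioS_image_nonempty (by linarith) u i)
      rintro x ⟨pa, hpa, rfl⟩
      have hins : Epart (Eop P f) pa u ≤ Epart (Eop P f) (insert s pa) u :=
        Epart_le_insert hne hQ hEfin pa s ⟨0, hpa.1, hs⟩ ⟨s + t, hpa.2.1, by linarith⟩ u
      set π₁ : Finset ℝ := (insert s pa).filter (· ≤ s) with hπ₁def
      set π₂ : Finset ℝ := ((insert s pa).filter (s ≤ ·)).image (fun x => x - s) with hπ₂def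
      have hmemins : ∀ x ∈ insert s pa, x ∈ Set.Icc (0:ℝ) (s + t) := by
        intro x hx
        rcases Finset.mem_insert.1 hx with rfl | hx
        · exact ⟨hs, by linarith⟩
        · exact hpa.2.2 x hx
      have hp1 : π₁ ∈ partitionsTo s := by
        refine ⟨Finset.mem_filter.2 ⟨Finset.mem_insert_of_mem hpa.1, hs⟩,
          Finset.mem_filter.2 ⟨Finset.mem_insert_self s pa, le_rfl⟩, ?_⟩
        intro x hx
        rcases Finset.mem_filter.1 hx with ⟨hx1, hx2⟩
        exact ⟨(hmemins x hx1).1, hx2⟩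
      have hp2 : π₂ ∈ partitionsTo t := by
        refine ⟨?_, ?_, ?_⟩
        · refine Finset.mem_image.2 ⟨s, Finset.mem_filter.2
            ⟨Finset.mem_insert_self s pa, le_rfl⟩, by ring⟩
        · refine Finset.mem_image.2 ⟨s + t, Finset.mem_filter.2
            ⟨Finset.mem_insert_of_mem hpa.2.1, by linarith⟩, by ring⟩
        · intro x hx
          rcases Finset.mem_image.1 hx with ⟨y, hy, rfl⟩
          rcases Finset.mem_filter.1 hy with ⟨hy1, hy2⟩
          exact ⟨by linarith, by linarith [(hmemins y hy1).2]⟩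
      have himg : π₂.image (s + ·) = (insert s pa).filter (s ≤ ·) := by
        ext y
        simp only [hπ₂def, Finset.mem_image, Finset.mem_filter]
        constructor
        · rintro ⟨z, ⟨x, ⟨hx1, hx2⟩, rfl⟩, rfl⟩
          have hxx : s + (x - s) = x := by ring
          rw [hxx]
          exact ⟨hx1, hx2⟩
        · intro hy
          exact ⟨y - s, ⟨y, hy, rfl⟩, by ring⟩
      have hunion : π₁ ∪ π₂.image (s + ·) = insert s pa := by
        rw [himg]
        ext y
        simp only [hπ₁def, Finset.mem_union, Finset.mem_filter]
        constructor
        · rintro (⟨h1, -⟩ | ⟨h1, -⟩) <;> exact h1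
        · intro hy
          rcases le_total y s with h | h
          · exact Or.inl ⟨hy, h⟩
          · exact Or.inr ⟨hy, h⟩
      have hsplit : Epart (Eop P f) (insert s pa) u
          = Epart (Eop P f) π₁ (Epart (Eop P f) π₂ u) := by
        rw [← hunion]
        exact Epart_union_split hs ht hp1 hp2 (Eop P f) u
      have hstep : Epart (Eop P f) π₁ (Epart (Eop P f) π₂ u)
          ≤ Epart (Eop P f) π₁ (NisioS P f t u) :=
        Epart_mono hne hQ hEfin π₁ (Epart_le_NisioS hSfin ht hp2 u)
      have hfinal : Epart (Eop P f) π₁ (NisioS P f t u) i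
          ≤ NisioS P f s (NisioS P f t u) i :=
        le_csSup (hSfin s hs _ i) ⟨π₁, hp1, rfl⟩
      calc Epart (Eop P f) pa u i ≤ Epart (Eop P f) (insert s pa) u i := hins i
        _ = Epart (Eop P f) π₁ (Epart (Eop P f) π₂ u) i := by rw [hsplit]
        _ ≤ Epart (Eop P f) π₁ (NisioS P f t u) i := hstep i
        _ ≤ NisioS P f s (NisioS P f t u) i := hfinal
    · -- S(s) S(t) ≤ S(s+t)
      apply csSup_le (NisioS_image_nonempty hs _ i)
      rintro x ⟨π₁, hπ₁, rfl⟩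
      refine le_of_forall_pos_le_add ?_
      intro ε hε
      obtain ⟨π₂, hπ₂, hclose⟩ := exists_partition_close hne hQ hEfin hSfin ht u hε
      have hw : NisioS P f t u ≤ Epart (Eop P f) π₂ u + fun _ => ε := fun j => hclose j
      have hmem : π₁ ∪ π₂.image (s + ·) ∈ partitionsTo (s + t) :=
        union_mem_partitionsTo hs ht hπ₁ hπ₂
      calc Epart (Eop P f) π₁ (NisioS P f t u) i
          ≤ Epart (Eop P f) π₁ (Epart (Eop P f) π₂ u + fun _ => ε) i :=
            Epart_mono hne hQ hEfin π₁ hw i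
        _ ≤ (Epart (Eop P f) π₁ (Epart (Eop P f) π₂ u) + (fun _ : Fin d => ε)) i :=
            Epart_shift hne hQ hEfin π₁ _ hε.le i
        _ = Epart (Eop P f) (π₁ ∪ π₂.image (s + ·)) u i + ε := by
            rw [Epart_union_split hs ht hπ₁ hπ₂]
            rfl
        _ ≤ NisioS P f (s + t) u i + ε :=
            add_le_add_left (le_csSup (hSfin (s + t) (by linarith) u i) ⟨_, hmem, rfl⟩) ε
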